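/- If x, y ∈ X lie in a common cluster of some partition P^s with s ≤ t, then x and y lie in the same connected component of the MCF complex K^t; consequently, if the partition P^t is fractured (some earlier partition does not refine it), then the number of connected components of K^t is strictly less than the number of clusters #P^t. -/

import Mathlib

open Finset

/-- The 1-skeleton graph of the MCF complex `K^T`. -/
def mcfGraph {X : Type*} [Fintype X] [DecidableEq X] {M : ℕ}
    (P : Fin M → Finpartition (univ : Finset X)) (t : Fin M → ℝ) (T : ℝ) :
    SimpleGraph X where
  Adj x y := x ≠ y ∧ ∃ s, t s ≤ T ∧ ∃ C ∈ (P s).parts, x ∈ C ∧ y ∈ C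
  symm := ⟨by
    rintro x y ⟨hxy, s, hs, C, hC, hx, hy⟩
    exact ⟨hxy.symm, s, hs, C, hC, hy, hx⟩⟩
  loopless := ⟨fun x h => h.1 rfl⟩

/-- If `x` and `y` share a cluster at some scale `≤ T`, then they are in the same
connected component of `K^T`; consequently, if the partition at a scale `t m` is
fractured, the number of connected components of `K^{t m}` is strictly smaller
than the number of clusters of `P m`. -/
theorem mcf_coclustered_reachable_and_fractured_lt
    {X : Type*} [Fintype X] [DecidableEq X] {M : ℕ}
    (P : Fin M → Finpartition (univ : Finset X)) (t : Fin M → ℝ) (ht : StrictMono t) :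
    (∀ (T : ℝ) (x y : X), (∃ s, t s ≤ T ∧ ∃ C ∈ (P s).parts, x ∈ C ∧ y ∈ C) →
        (mcfGraph P t T).Reachable x y) ∧
      ∀ m : Fin M, (∃ s : Fin M, t s ≤ t m ∧ ¬ P s ≤ P m) →
        Nat.card (mcfGraph P t (t m)).ConnectedComponent < (P m).parts.card := by
  classical
  have reach : ∀ (T : ℝ) (x y : X), (∃ s, t s ≤ T ∧ ∃ C ∈ (P s).parts, x ∈ C ∧ y ∈ C) →
      (mcfGraph P t T).Reachable x y := by
    intro T x y h
    by_cases hxy : x = y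
    · subst hxy; exact SimpleGraph.Reachable.refl x
    · exact SimpleGraph.Adj.reachable ⟨hxy, h⟩
  refine ⟨reach, ?_⟩
  rintro m ⟨s, hs, hns⟩
  set G := mcfGraph P t (t m) with hG
  have key : ∀ (s' : Fin M), t s' ≤ t m → ∀ {C : Finset X}, C ∈ (P s').parts → ∀ {x y : X},
      x ∈ C → y ∈ C → G.connectedComponentMk x = G.connectedComponentMk y := by
    intro s' hs' C hC x y hx hy
    exact SimpleGraph.ConnectedComponent.sound (reach _ x y ⟨s', hs', C, hC, hx, hy⟩)
  have hne : ∀ C : {C // C ∈ (P m).parts}, (C : Finset X).Nonempty :=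
    fun C => (P m).nonempty_of_mem_parts C.2
  let F : {C // C ∈ (P m).parts} → G.ConnectedComponent :=
    fun C => G.connectedComponentMk (hne C).choose
  have hF : ∀ (C : {C // C ∈ (P m).parts}) (x : X), x ∈ (C : Finset X) →
      F C = G.connectedComponentMk x :=
    fun C x hx => key m le_rfl C.2 (hne C).choose_spec hx
  have hsurj : Function.Surjective F := by
    intro c
    induction c using SimpleGraph.ConnectedComponent.ind with
    | _ x =>
      obtain ⟨C, hC, hxC⟩ := (P m).exists_mem (mem_univ x)
      exact ⟨⟨C, hC⟩, hF ⟨C, hC⟩ x hxC⟩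
  have hninj : ¬ Function.Injective F := by
    intro hinj
    apply hns
    intro C hC
    obtain ⟨x, hx⟩ := (P s).nonempty_of_mem_parts hC
    obtain ⟨D, hD, hxD⟩ := (P m).exists_mem (mem_univ x)
    refine ⟨D, hD, fun y hy => ?_⟩
    obtain ⟨D', hD', hyD'⟩ := (P m).exists_mem (mem_univ y)
    have : F ⟨D, hD⟩ = F ⟨D', hD'⟩ := by
      rw [hF ⟨D, hD⟩ x hxD, hF ⟨D', hD'⟩ y hyD']
      exact key s hs hC hx hy
    have := hinj this
    rw [show D = D' from congrArg Subtype.val this]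
    exact hyD'
  have hfin : Finite G.ConnectedComponent := Finite.of_surjective F hsurj
  have hcard : Nat.card {C // C ∈ (P m).parts} = (P m).parts.card := by
    simp [Nat.card_eq_fintype_card]
  rw [← hcard]
  refine lt_of_le_of_ne (Nat.card_le_card_of_surjective F hsurj) (fun heq => ?_)
  have hinj : Function.Injective F := by
    have : Nat.card G.ConnectedComponent = Nat.card {C // C ∈ (P m).parts} := heq
    rw [Nat.card_eq_fintype_card, Nat.card_eq_fintype_card] at this
    exact (Fintype.bijective_iff_surjective_and_card F).2 ⟨hsurj, this.symm⟩ |>.1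
  exact hninj hinj
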